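/- Let (Ω,F,P) be a probability space, p ∈ (0,1), D : Ω → ℝ taking values in {0,1} with P(D = 1) = p, and γ, T : Ω → ℕ with 1 ≤ γ almost surely and T ≤ γ pointwise. Define D̄ := T/γ. Assume D is independent of (γ, T), E[D̄ | σ(γ)] = p almost surely, and E[(D̄ − p)² | σ(γ)] = p(1−p)/γ almost surely, with 1/γ integrable. Let θ⁰⁰, μᵈᵉ, λˢᵉ : ℕ → ℝ and ε : Ω → ℝ be such that Y := θ⁰⁰(γ) + μᵈᵉ(γ)·D + λˢᵉ(γ)·T + ε with all terms integrable, E[ε] = 0, E[ε·D̄] = 0, and λˢᵉ(γ) integrable. Then Cov(Y, D̄)/Var(D̄) = E[λˢᵉ(γ)] / E[1/γ] = E[ w(γ) · γ·λˢᵉ(γ) ], where w(γ) := (1/γ)/E[1/γ]; i.e., when isolated nodes are excluded, the D̄-regression spillover coefficient identifies a weighted average of γ·λˢᵉ(γ) with weights inversely proportional to degree. -/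

import Mathlib

open MeasureTheory ProbabilityTheory

/-- Theorem 3: When isolated nodes are excluded (`γ ≥ 1` a.s.), the
`D̄`-regression spillover coefficient `Cov(Y, D̄)/Var(D̄)` identifies
`E[λˢᵉ(γ)]/E[1/γ] = E[w(γ)·γ·λˢᵉ(γ)]` with weights `w(γ) = (1/γ)/E[1/γ]`
inversely proportional to degree. -/
theorem stmt10
    {Ω : Type*} [MeasurableSpace Ω] (P : Measure Ω) [IsProbabilityMeasure P]
    (p : ℝ) (hp0 : 0 < p) (hp1 : p < 1)
    (D : Ω → ℝ) (hDmeas : Measurable D) (hD01 : ∀ ω, D ω = 0 ∨ D ω = 1)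
    (hDp : P {ω | D ω = 1} = ENNReal.ofReal p)
    (γ T : Ω → ℕ) (hγmeas : Measurable γ) (hTmeas : Measurable T)
    (hγ1 : ∀ᵐ ω ∂P, 1 ≤ γ ω) (hTγ : ∀ ω, T ω ≤ γ ω)
    (Dbar : Ω → ℝ) (hDbar : ∀ ω, Dbar ω = (T ω : ℝ) / (γ ω : ℝ))
    (hindep : IndepFun D (fun ω => (γ ω, T ω)) P)
    (hcondmean : P[Dbar | MeasurableSpace.comap γ inferInstance]
      =ᵐ[P] fun _ => p)
    (hcondvar : P[fun ω => (Dbar ω - p) ^ 2 | MeasurableSpace.comap γ inferInstance]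
      =ᵐ[P] fun ω => p * (1 - p) / (γ ω : ℝ))
    (hinvγint : Integrable (fun ω => ((γ ω : ℝ))⁻¹) P)
    (θ00 μde lamse : ℕ → ℝ) (ε : Ω → ℝ) (Y : Ω → ℝ)
    (hY : ∀ ω, Y ω = θ00 (γ ω) + μde (γ ω) * D ω + lamse (γ ω) * (T ω : ℝ) + ε ω)
    (hθint : Integrable (fun ω => θ00 (γ ω)) P)
    (hμint : Integrable (fun ω => μde (γ ω)) P)
    (hlamTint : Integrable (fun ω => lamse (γ ω) * (T ω : ℝ)) P)
    (hεint : Integrable ε P) (hYint : Integrable Y P)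
    (hε : ∫ ω, ε ω ∂P = 0)
    (hεDbar : ∫ ω, ε ω * Dbar ω ∂P = 0)
    (hlamint : Integrable (fun ω => lamse (γ ω)) P) :
    ((∫ ω, Y ω * Dbar ω ∂P) - (∫ ω, Y ω ∂P) * (∫ ω, Dbar ω ∂P)) /
        ((∫ ω, Dbar ω * Dbar ω ∂P) - (∫ ω, Dbar ω ∂P) * (∫ ω, Dbar ω ∂P))
      = (∫ ω, lamse (γ ω) ∂P) / (∫ ω, ((γ ω : ℝ))⁻¹ ∂P)
    ∧ ((∫ ω, Y ω * Dbar ω ∂P) - (∫ ω, Y ω ∂P) * (∫ ω, Dbar ω ∂P)) /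
        ((∫ ω, Dbar ω * Dbar ω ∂P) - (∫ ω, Dbar ω ∂P) * (∫ ω, Dbar ω ∂P))
      = ∫ ω, (((γ ω : ℝ))⁻¹ / (∫ ω', ((γ ω' : ℝ))⁻¹ ∂P)) *
          ((γ ω : ℝ) * lamse (γ ω)) ∂P := by
  classical
  rename_i mΩ hPP
  -- E[D] = p and D integrable
  have hset : MeasurableSet[mΩ] {ω | D ω = 1} := hDmeas (measurableSet_singleton 1)
  have hDind : D = Set.indicator {ω | D ω = 1} (fun _ => (1 : ℝ)) := by
    funext ω
    rcases hD01 ω with h | h <;> simp [Set.indicator_apply, h]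
  have hDint : Integrable D P := by
    rw [hDind]; exact (integrable_const 1).indicator hset
  have hED : ∫ ω, D ω ∂P = p := by
    have h0 : ∫ ω, D ω ∂P = ∫ ω, Set.indicator {ω | D ω = 1} (fun _ => (1:ℝ)) ω ∂P := by
      rw [← hDind]
    rw [h0]
    have h1 := integral_indicator_one (μ := P) hset
    rw [measureReal_def, hDp, ENNReal.toReal_ofReal hp0.le] at h1
    exact h1
  have hDnorm : ∀ ω, ‖D ω‖ ≤ 1 := by
    intro ω; rcases hD01 ω with h | h <;> simp [h]
  set m : MeasurableSpace Ω := MeasurableSpace.comap γ inferInstance with hm_def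
  have hm : m ≤ mΩ := hγmeas.comap_le
  haveI : IsFiniteMeasure (P.trim hm) := isFiniteMeasure_trim hm
  -- strong measurability of functions of γ w.r.t. m
  have hsm : ∀ φ : ℕ → ℝ, StronglyMeasurable[m] (fun ω => φ (γ ω)) := by
    intro φ
    exact ((measurable_of_countable φ).comp (Measurable.of_comap_le le_rfl)).stronglyMeasurable
  -- basic facts about Dbar
  have hDb0 : ∀ ω, 0 ≤ Dbar ω := by
    intro ω; rw [hDbar]; positivity
  have hDb1 : ∀ ω, Dbar ω ≤ 1 := by
    intro ω; rw [hDbar]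
    rcases Nat.eq_zero_or_pos (γ ω) with h | h
    · have : T ω = 0 := Nat.le_antisymm (h ▸ hTγ ω) (Nat.zero_le _)
      simp [this]
    · rw [div_le_one (by exact_mod_cast h)]
      exact_mod_cast hTγ ω
  have hDbnorm : ∀ ω, ‖Dbar ω‖ ≤ 1 := by
    intro ω; rw [Real.norm_eq_abs, abs_of_nonneg (hDb0 ω)]; exact hDb1 ω
  have hDbmeas : Measurable[mΩ] Dbar := by
    have : Dbar = fun ω => (T ω : ℝ) / (γ ω : ℝ) := funext hDbar
    rw [this]
    exact ((measurable_of_countable (fun n : ℕ => (n:ℝ))).comp hTmeas).div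
      ((measurable_of_countable (fun n : ℕ => (n:ℝ))).comp hγmeas)
  have hDbint : Integrable Dbar P :=
    Integrable.mono' (integrable_const (μ := P) 1) hDbmeas.aestronglyMeasurable
      (Filter.Eventually.of_forall hDbnorm)
  -- product with a bounded factor on the right is integrable
  have mulB : ∀ (f g : Ω → ℝ), Integrable f P → AEStronglyMeasurable[mΩ] g P →
      (∀ ω, ‖g ω‖ ≤ 1) → Integrable (fun ω => f ω * g ω) P := by
    intro f g hf hg hb
    exact (Integrable.bdd_mul (c := 1) hf hg (Filter.Eventually.of_forall hb)).congr
      (Filter.Eventually.of_forall fun ω => mul_comm _ _)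
  -- the pull-out lemma
  have pull : ∀ (f g h : Ω → ℝ), StronglyMeasurable[m] f →
      Integrable (fun ω => f ω * g ω) P → Integrable g P →
      (P[g|m] =ᵐ[P] h) → ∫ ω, f ω * g ω ∂P = ∫ ω, f ω * h ω ∂P := by
    intro f g h hf hfg hg hgh
    have h1 : ∫ ω, f ω * g ω ∂P = ∫ ω, (P[fun ω => f ω * g ω|m]) ω ∂P :=
      (integral_condExp hm).symm
    rw [h1]
    refine integral_congr_ae ?_
    have h2 : P[f * g|m] =ᵐ[P] f * P[g|m] :=
      condExp_mul_of_stronglyMeasurable_left hf hfg hg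
    filter_upwards [h2, hgh] with ω h2ω hghω
    simpa [Pi.mul_def] using h2ω.trans (by simp [hghω])
  -- E[Dbar] = p
  have hEDbar : ∫ ω, Dbar ω ∂P = p := by
    rw [← integral_condExp hm (f := Dbar), integral_congr_ae hcondmean]
    simp
  -- the variance function
  set V : Ω → ℝ := fun ω => (Dbar ω - p) ^ 2 with hV_def
  have hVmeas : Measurable[mΩ] V := (hDbmeas.sub measurable_const).pow_const 2
  have hVnorm : ∀ ω, ‖V ω‖ ≤ 1 := by
    intro ω
    rw [Real.norm_eq_abs, abs_of_nonneg (sq_nonneg _)]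
    have h1 : 0 ≤ 1 - Dbar ω + p := by linarith [hDb1 ω]
    have h2 : 0 ≤ 1 + Dbar ω - p := by linarith [hDb0 ω]
    show (Dbar ω - p) ^ 2 ≤ 1
    nlinarith [mul_nonneg h1 h2]
  have hVint : Integrable V P :=
    Integrable.mono' (integrable_const (μ := P) 1) hVmeas.aestronglyMeasurable
      (Filter.Eventually.of_forall hVnorm)
  set c : ℝ := ∫ ω, ((γ ω : ℝ))⁻¹ ∂P with hc_def
  have hEV : ∫ ω, V ω ∂P = p * (1 - p) * c := by
    rw [← integral_condExp hm (f := V), integral_congr_ae hcondvar]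
    simp_rw [div_eq_mul_inv]
    rw [integral_const_mul]
  -- E[Dbar^2]
  have hEDb2 : ∫ ω, Dbar ω * Dbar ω ∂P = p * (1 - p) * c + p ^ 2 := by
    have hid : ∀ ω, Dbar ω * Dbar ω = V ω + (2 * p) * Dbar ω - p ^ 2 := by
      intro ω; simp only [hV_def]; ring
    simp_rw [hid]
    have i2 : Integrable (fun ω => (2 * p) * Dbar ω) P := hDbint.const_mul _
    have i1 : Integrable (fun ω => V ω + (2 * p) * Dbar ω) P := hVint.add i2
    rw [integral_sub i1 (integrable_const _), integral_add hVint i2,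
      integral_const_mul, hEDbar, hEV]
    simp
    ring
  -- θ and μ pieces
  have hθDb : ∫ ω, θ00 (γ ω) * Dbar ω ∂P = p * ∫ ω, θ00 (γ ω) ∂P := by
    rw [pull _ Dbar (fun _ => p) (hsm θ00)
      (mulB _ _ hθint hDbmeas.aestronglyMeasurable hDbnorm) hDbint hcondmean,
      integral_mul_const, mul_comm]
  have hμDb : ∫ ω, μde (γ ω) * Dbar ω ∂P = p * ∫ ω, μde (γ ω) ∂P := by
    rw [pull _ Dbar (fun _ => p) (hsm μde)
      (mulB _ _ hμint hDbmeas.aestronglyMeasurable hDbnorm) hDbint hcondmean,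
      integral_mul_const, mul_comm]
  -- the function L = λ(γ)·γ
  set L : Ω → ℝ := fun ω => lamse (γ ω) * (γ ω : ℝ) with hL_def
  have hLsm : StronglyMeasurable[m] L := hsm (fun n => lamse n * (n : ℝ))
  have hTid : ∀ ω, (T ω : ℝ) = (γ ω : ℝ) * Dbar ω := by
    intro ω
    rcases Nat.eq_zero_or_pos (γ ω) with h | h
    · have : T ω = 0 := Nat.le_antisymm (h ▸ hTγ ω) (Nat.zero_le _)
      simp [this, h]
    · rw [hDbar]
      have hne : (γ ω : ℝ) ≠ 0 := Nat.cast_ne_zero.2 h.ne'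
      field_simp
  have hLDb : ∀ ω, lamse (γ ω) * (T ω : ℝ) = L ω * Dbar ω := by
    intro ω; rw [hTid]; simp only [hL_def]; ring
  have hLDbint : Integrable (fun ω => L ω * Dbar ω) P :=
    hlamTint.congr (Filter.Eventually.of_forall hLDb)
  have hLint : Integrable L P := by
    have hcond : P[fun ω => L ω * Dbar ω|m] =ᵐ[P] fun ω => L ω * p := by
      have h2 : P[L * Dbar|m] =ᵐ[P] L * P[Dbar|m] :=
        condExp_mul_of_stronglyMeasurable_left hLsm hLDbint hDbint
      filter_upwards [h2, hcondmean] with ω h2ω hcm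
      simpa [Pi.mul_def] using h2ω.trans (by simp [hcm])
    have h1 : Integrable (fun ω => L ω * p) P :=
      (integrable_condExp (f := fun ω => L ω * Dbar ω)).congr hcond
    have h2 := h1.const_mul p⁻¹
    refine h2.congr (Filter.Eventually.of_forall fun ω => ?_)
    field_simp
  set G : ℝ := ∫ ω, L ω ∂P with hG_def
  have hLT : ∫ ω, lamse (γ ω) * (T ω : ℝ) ∂P = p * G := by
    have e1 : ∫ ω, lamse (γ ω) * (T ω : ℝ) ∂P = ∫ ω, L ω * Dbar ω ∂P :=
      integral_congr_ae (Filter.Eventually.of_forall hLDb)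
    rw [e1, pull L Dbar (fun _ => p) hLsm hLDbint hDbint hcondmean,
      integral_mul_const, mul_comm]
  -- λ·T·Dbar piece
  have hLVint : Integrable (fun ω => L ω * V ω) P :=
    mulB _ _ hLint hVmeas.aestronglyMeasurable hVnorm
  have hLV : ∫ ω, L ω * V ω ∂P = p * (1 - p) * ∫ ω, lamse (γ ω) ∂P := by
    rw [pull L V (fun ω => p * (1 - p) / (γ ω : ℝ)) hLsm hLVint hVint hcondvar]
    have : ∫ ω, L ω * (p * (1 - p) / (γ ω : ℝ)) ∂P
        = ∫ ω, (p * (1 - p)) * lamse (γ ω) ∂P := by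
      refine integral_congr_ae ?_
      filter_upwards [hγ1] with ω h1
      have hne : (γ ω : ℝ) ≠ 0 := Nat.cast_ne_zero.2 (by omega)
      simp only [hL_def]
      field_simp
    rw [this, integral_const_mul]
  have hLTDb : ∫ ω, lamse (γ ω) * (T ω : ℝ) * Dbar ω ∂P
      = p * (1 - p) * (∫ ω, lamse (γ ω) ∂P) + p ^ 2 * G := by
    have hid : ∀ ω, lamse (γ ω) * (T ω : ℝ) * Dbar ω
        = L ω * V ω + (2 * p) * (L ω * Dbar ω) - p ^ 2 * L ω := by
      intro ω
      rw [hLDb]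
      simp only [hV_def, hL_def]
      ring
    simp_rw [hid]
    have i2 : Integrable (fun ω => (2 * p) * (L ω * Dbar ω)) P := hLDbint.const_mul _
    have i1 : Integrable (fun ω => L ω * V ω + (2 * p) * (L ω * Dbar ω)) P := hLVint.add i2
    have i3 : Integrable (fun ω => p ^ 2 * L ω) P := hLint.const_mul _
    rw [integral_sub i1 i3, integral_add hLVint i2,
      integral_const_mul, integral_const_mul, hLV]
    have e1 : ∫ ω, lamse (γ ω) * (T ω : ℝ) ∂P = ∫ ω, L ω * Dbar ω ∂P :=
      integral_congr_ae (Filter.Eventually.of_forall hLDb)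
    rw [e1.symm.trans hLT, ← hG_def]
    ring
  -- independence pieces
  have hindep' : ∀ φ : ℕ × ℕ → ℝ, IndepFun D (fun ω => φ (γ ω, T ω)) P := by
    intro φ
    exact hindep.comp measurable_id (measurable_of_countable φ)
  have hDmul : ∀ φ : ℕ × ℕ → ℝ, Integrable (fun ω => φ (γ ω, T ω)) P →
      ∫ ω, D ω * φ (γ ω, T ω) ∂P = p * ∫ ω, φ (γ ω, T ω) ∂P := by
    intro φ hφint
    have h := (hindep' φ).integral_mul_eq_mul_integral hDint.aestronglyMeasurable hφint.aestronglyMeasurable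
    have e : (fun ω => D ω * φ (γ ω, T ω)) = D * (fun ω => φ (γ ω, T ω)) := rfl
    rw [e, h, hED]
  have hμD : ∫ ω, μde (γ ω) * D ω ∂P = p * ∫ ω, μde (γ ω) ∂P := by
    have h1 : ∫ ω, D ω * μde (γ ω) ∂P = p * ∫ ω, μde (γ ω) ∂P :=
      hDmul (fun q => μde q.1) hμint
    rw [← h1]
    refine integral_congr_ae (Filter.Eventually.of_forall fun ω => ?_)
    simp only []
    ring
  have hμDint : Integrable (fun ω => μde (γ ω) * D ω) P :=
    mulB _ _ hμint hDmeas.aestronglyMeasurable hDnorm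
  have hμDDb : ∫ ω, μde (γ ω) * D ω * Dbar ω ∂P = p ^ 2 * ∫ ω, μde (γ ω) ∂P := by
    have hgint : Integrable (fun ω => μde (γ ω) * Dbar ω) P :=
      mulB _ _ hμint hDbmeas.aestronglyMeasurable hDbnorm
    have hgint' : Integrable (fun ω => μde (γ ω) * ((T ω : ℝ) / (γ ω : ℝ))) P := by
      refine hgint.congr (Filter.Eventually.of_forall fun ω => ?_)
      simp only [hDbar]
    have h1 : ∫ ω, D ω * (μde (γ ω) * ((T ω : ℝ) / (γ ω : ℝ))) ∂P
        = p * ∫ ω, μde (γ ω) * ((T ω : ℝ) / (γ ω : ℝ)) ∂P :=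
      hDmul (fun q => μde q.1 * ((q.2 : ℝ) / (q.1 : ℝ))) hgint'
    have e2 : ∫ ω, μde (γ ω) * ((T ω : ℝ) / (γ ω : ℝ)) ∂P
        = ∫ ω, μde (γ ω) * Dbar ω ∂P := by
      refine integral_congr_ae (Filter.Eventually.of_forall fun ω => ?_)
      simp only [hDbar]
    have e3 : ∫ ω, μde (γ ω) * D ω * Dbar ω ∂P
        = ∫ ω, D ω * (μde (γ ω) * ((T ω : ℝ) / (γ ω : ℝ))) ∂P := by
      refine integral_congr_ae (Filter.Eventually.of_forall fun ω => ?_)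
      simp only [hDbar]; ring
    rw [e3, h1, e2, hμDb]
    ring
  -- expectation of Y
  have hEY : ∫ ω, Y ω ∂P
      = (∫ ω, θ00 (γ ω) ∂P) + p * (∫ ω, μde (γ ω) ∂P) + p * G := by
    have h0 : ∫ ω, Y ω ∂P = ∫ ω, (θ00 (γ ω) + μde (γ ω) * D ω
        + lamse (γ ω) * (T ω : ℝ) + ε ω) ∂P := integral_congr_ae
      (Filter.Eventually.of_forall fun ω => hY ω)
    have ia : Integrable (fun ω => θ00 (γ ω) + μde (γ ω) * D ω) P := hθint.add hμDint
    have ib : Integrable (fun ω => θ00 (γ ω) + μde (γ ω) * D ω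
        + lamse (γ ω) * (T ω : ℝ)) P := ia.add hlamTint
    rw [h0, integral_add ib hεint, integral_add ia hlamTint,
      integral_add hθint hμDint, hε, hμD, hLT]
    ring
  -- expectation of Y·Dbar
  have hθDbint : Integrable (fun ω => θ00 (γ ω) * Dbar ω) P :=
    mulB _ _ hθint hDbmeas.aestronglyMeasurable hDbnorm
  have hμDDbint : Integrable (fun ω => μde (γ ω) * D ω * Dbar ω) P :=
    mulB _ _ hμDint hDbmeas.aestronglyMeasurable hDbnorm
  have hLTDbint : Integrable (fun ω => lamse (γ ω) * (T ω : ℝ) * Dbar ω) P :=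
    mulB _ _ hlamTint hDbmeas.aestronglyMeasurable hDbnorm
  have hεDbint : Integrable (fun ω => ε ω * Dbar ω) P :=
    mulB _ _ hεint hDbmeas.aestronglyMeasurable hDbnorm
  have hEYDb : ∫ ω, Y ω * Dbar ω ∂P
      = p * (∫ ω, θ00 (γ ω) ∂P) + p ^ 2 * (∫ ω, μde (γ ω) ∂P)
        + (p * (1 - p) * (∫ ω, lamse (γ ω) ∂P) + p ^ 2 * G) := by
    have h0 : ∫ ω, Y ω * Dbar ω ∂P = ∫ ω, (θ00 (γ ω) * Dbar ω
        + μde (γ ω) * D ω * Dbar ω + lamse (γ ω) * (T ω : ℝ) * Dbar ω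
        + ε ω * Dbar ω) ∂P := by
      refine integral_congr_ae (Filter.Eventually.of_forall fun ω => ?_)
      simp only [hY]; ring
    have ia : Integrable (fun ω => θ00 (γ ω) * Dbar ω + μde (γ ω) * D ω * Dbar ω) P :=
      hθDbint.add hμDDbint
    have ib : Integrable (fun ω => θ00 (γ ω) * Dbar ω + μde (γ ω) * D ω * Dbar ω
        + lamse (γ ω) * (T ω : ℝ) * Dbar ω) P := ia.add hLTDbint
    rw [h0, integral_add ib hεDbint, integral_add ia hLTDbint,
      integral_add hθDbint hμDDbint, hεDbar, hθDb, hμDDb, hLTDb]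
    ring
  -- put it all together
  have hpne : p * (1 - p) ≠ 0 :=
    mul_ne_zero hp0.ne' (sub_ne_zero.2 (ne_of_gt (by linarith)))
  have hnum : (∫ ω, Y ω * Dbar ω ∂P) - (∫ ω, Y ω ∂P) * (∫ ω, Dbar ω ∂P)
      = (p * (1 - p)) * ∫ ω, lamse (γ ω) ∂P := by
    rw [hEYDb, hEY, hEDbar]; ring
  have hden : (∫ ω, Dbar ω * Dbar ω ∂P) - (∫ ω, Dbar ω ∂P) * (∫ ω, Dbar ω ∂P)
      = (p * (1 - p)) * c := by
    rw [hEDb2, hEDbar]; ring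
  have hmain : ((∫ ω, Y ω * Dbar ω ∂P) - (∫ ω, Y ω ∂P) * (∫ ω, Dbar ω ∂P)) /
        ((∫ ω, Dbar ω * Dbar ω ∂P) - (∫ ω, Dbar ω ∂P) * (∫ ω, Dbar ω ∂P))
      = (∫ ω, lamse (γ ω) ∂P) / c := by
    rw [hnum, hden, mul_div_mul_left _ _ hpne]
  refine ⟨hmain, ?_⟩
  rw [hmain]
  have hcongr : ∫ ω, (((γ ω : ℝ))⁻¹ / c) * ((γ ω : ℝ) * lamse (γ ω)) ∂P
      = ∫ ω, lamse (γ ω) / c ∂P := by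
    refine integral_congr_ae ?_
    filter_upwards [hγ1] with ω h1
    have hne : (γ ω : ℝ) ≠ 0 := Nat.cast_ne_zero.2 (by omega)
    have key : ((γ ω : ℝ))⁻¹ * (γ ω : ℝ) = 1 := inv_mul_cancel₀ hne
    calc (((γ ω : ℝ))⁻¹ / c) * ((γ ω : ℝ) * lamse (γ ω))
        = (((γ ω : ℝ))⁻¹ * (γ ω : ℝ)) * lamse (γ ω) / c := by ring
      _ = lamse (γ ω) / c := by rw [key, one_mul]
  rw [hcongr, integral_div]
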